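/- Let n ≥ 1 and α ∈ ℝ, and let B = B(x₀, R) be an open ball in ℝ^n with |x₀| < 3R (a ball of type II). Then there is a constant c > 0 depending only on n and α such that ∫_B |y|^α dy ≥ c R^{α+n}. Moreover, if −n < α < ∞, there is also C > 0 depending only on n and α such that ∫_B |y|^α dy ≤ C R^{α+n}. -/

import Mathlib

open MeasureTheory Real Filter
open scoped ENNReal NNReal Topology

noncomputable section

namespace HardyHenon

/-- `n`-dimensional Euclidean space. -/
abbrev E (n : ℕ) : Type := EuclideanSpace ℝ (Fin n)

/-- Axis-parallel cube with corner `a` and side length `h`. -/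
def cube (n : ℕ) (a : Fin n → ℝ) (h : ℝ) : Set (E n) :=
  {x | ∀ i, a i ≤ x i ∧ x i ≤ a i + h}

/-- Average `⟨f⟩_Q` over a cube (as an extended nonnegative real, via the lower integral). -/
def cubeAvg (n : ℕ) (f : E n → ℝ) (a : Fin n → ℝ) (h : ℝ) : ℝ≥0∞ :=
  (volume (cube n a h))⁻¹ * ∫⁻ x in cube n a h, ENNReal.ofReal (f x)

/-- The heat flow `e^{tΔ} f (x) = (4πt)^{-n/2} ∫ e^{-|x-y|²/(4t)} f(y) dy`. -/
def heatFlow (n : ℕ) (t : ℝ) (f : E n → ℝ) (x : E n) : ℝ :=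
  (4 * π * t) ^ (-(n : ℝ) / 2) * ∫ y, Real.exp (-‖x - y‖ ^ 2 / (4 * t)) * f y

/-- The condition `⟨|f|⟩_Q → 0` as `|Q| → ∞`. -/
def AvgDecay (n : ℕ) (f : E n → ℝ) : Prop :=
  ∀ ε : ℝ, 0 < ε → ∃ M : ℝ, ∀ (a : Fin n → ℝ) (h : ℝ), 0 < h → M ≤ h ^ n →
    cubeAvg n (fun x => |f x|) a h ≤ ENNReal.ofReal ε

/-- The two-weight constant `[σ, w]_{A^α_{p,q}}
  = sup_Q |Q|^{α/n - (1/p - 1/q)} ⟨σ⟩_Q^{1/p'} ⟨w⟩_Q^{1/q}`. -/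
def twoWeightConst (n : ℕ) (p q α : ℝ) (σ w : E n → ℝ) : ℝ≥0∞ :=
  ⨆ (a : Fin n → ℝ) (h : ℝ) (_ : 0 < h),
    volume (cube n a h) ^ (α / n - (1 / p - 1 / q)) *
      cubeAvg n σ a h ^ (1 - 1 / p) * cubeAvg n w a h ^ (1 / q)

/-- The Hardy–Littlewood maximal function (over axis-parallel cubes). -/
def maximal (n : ℕ) (f : E n → ℝ) (x : E n) : ℝ≥0∞ :=
  ⨆ (a : Fin n → ℝ) (h : ℝ) (_ : 0 < h) (_ : x ∈ cube n a h),
    cubeAvg n (fun y => |f y|) a h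

/-- The Fujii–Wilson `A_∞` constant `|w|_{A_∞} = sup_Q w(Q)⁻¹ ∫_Q M(χ_Q w)`. -/
def fujiiWilson (n : ℕ) (w : E n → ℝ) : ℝ≥0∞ :=
  ⨆ (a : Fin n → ℝ) (h : ℝ) (_ : 0 < h),
    (∫⁻ x in cube n a h, ENNReal.ofReal (w x))⁻¹ *
      ∫⁻ x in cube n a h, maximal n ((cube n a h).indicator w) x

/-- Membership in the Fujii–Wilson `A_∞` class (for a weight, i.e. a nonnegative
locally integrable function). -/
def MemAinfty (n : ℕ) (w : E n → ℝ) : Prop :=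
  (∀ x, 0 ≤ w x) ∧ LocallyIntegrable w volume ∧ fujiiWilson n w ≠ ⊤

/-- The Muckenhoupt `A_p` constant `[w]_{A_p} = sup_Q ⟨w⟩_Q ⟨w^{1-p'}⟩_Q^{p-1}`. -/
def apConst (n : ℕ) (p : ℝ) (w : E n → ℝ) : ℝ≥0∞ :=
  ⨆ (a : Fin n → ℝ) (h : ℝ) (_ : 0 < h),
    cubeAvg n w a h * cubeAvg n (fun x => w x ^ (1 - p / (p - 1))) a h ^ (p - 1)

/-- Membership in the Muckenhoupt class `A_p`. -/
def MemAp (n : ℕ) (p : ℝ) (w : E n → ℝ) : Prop :=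
  (∀ x, 0 ≤ w x) ∧ LocallyIntegrable w volume ∧ apConst n p w ≠ ⊤

/-- The Morrey norm `‖f‖_{M^{1/rinv}_q} = sup_Q |Q|^{rinv - 1/q} ‖f‖_{L^q(Q)}`;
here `rinv` is the reciprocal of the first Morrey exponent. -/
def morreyNorm (n : ℕ) (rinv q : ℝ) (f : E n → ℝ) : ℝ≥0∞ :=
  ⨆ (a : Fin n → ℝ) (h : ℝ) (_ : 0 < h),
    volume (cube n a h) ^ (rinv - 1 / q) *
      eLpNorm f (ENNReal.ofReal q) (volume.restrict (cube n a h))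

/-- The weighted measure `σ dx`. -/
def wMeasure (n : ℕ) (σ : E n → ℝ) : Measure (E n) :=
  volume.withDensity fun x => ENNReal.ofReal (σ x)

/-- `u` is a mild solution of `∂ₜu - Δu = V uᵗ`, `u(0) = u₀`, belonging to
`C([0,T); L^p(σ))`. -/
def IsMildSolution (n : ℕ) (p : ℝ) (σ V : E n → ℝ) (τ T : ℝ)
    (u₀ : E n → ℝ) (u : ℝ → E n → ℝ) : Prop :=
  (∀ t, 0 ≤ t → t < T → MemLp (u t) (ENNReal.ofReal p) (wMeasure n σ)) ∧
  (∀ t₀, 0 ≤ t₀ → t₀ < T →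
    Tendsto (fun t => eLpNorm (fun x => u t x - u t₀ x) (ENNReal.ofReal p) (wMeasure n σ))
      (nhdsWithin t₀ (Set.Ico 0 T)) (nhds 0)) ∧
  (∀ᵐ x ∂(volume : Measure (E n)), u 0 x = u₀ x) ∧
  (∀ t, 0 < t → t < T → ∀ᵐ x ∂(volume : Measure (E n)),
    u t x = heatFlow n t u₀ x +
      ∫ s in Set.Ioo (0 : ℝ) t, heatFlow n (t - s) (fun y => V y * u s y ^ τ) x)

/-- `u` is a global mild solution of `∂ₜu - Δu = V uᵗ`, `u(0) = u₀`, belonging to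
`C([0,∞); L^p(σ))`. -/
def IsGlobalMildSolution (n : ℕ) (p : ℝ) (σ V : E n → ℝ) (τ : ℝ)
    (u₀ : E n → ℝ) (u : ℝ → E n → ℝ) : Prop :=
  (∀ t, 0 ≤ t → MemLp (u t) (ENNReal.ofReal p) (wMeasure n σ)) ∧
  (∀ t₀, 0 ≤ t₀ →
    Tendsto (fun t => eLpNorm (fun x => u t x - u t₀ x) (ENNReal.ofReal p) (wMeasure n σ))
      (nhdsWithin t₀ (Set.Ici 0)) (nhds 0)) ∧
  (∀ᵐ x ∂(volume : Measure (E n)), u 0 x = u₀ x) ∧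
  (∀ t, 0 < t → ∀ᵐ x ∂(volume : Measure (E n)),
    u t x = heatFlow n t u₀ x +
      ∫ s in Set.Ioo (0 : ℝ) t, heatFlow n (t - s) (fun y => V y * u s y ^ τ) x)

end HardyHenon

open HardyHenon

section Aux
open Metric Set

private lemma lowerAux (n : ℕ) (hn : 1 ≤ n) (α : ℝ) :
    ∃ c : ℝ, 0 < c ∧ ∀ (x₀ : E n) (R : ℝ), 0 < R → ‖x₀‖ < 3 * R →
      ENNReal.ofReal (c * R ^ (α + n)) ≤
        ∫⁻ y in Metric.ball x₀ R, ENNReal.ofReal (‖y‖ ^ α) := by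
  haveI : Nontrivial (E n) := by
    have h : 0 < Module.finrank ℝ (E n) := by
      rw [finrank_euclideanSpace_fin]; omega
    exact Module.nontrivial_of_finrank_pos h
  have hV : (0:ℝ≥0∞) < volume (Metric.ball (0 : E n) 1) := measure_ball_pos _ _ one_pos
  have hVt : volume (Metric.ball (0 : E n) 1) ≠ ⊤ := measure_ball_lt_top.ne
  set v : ℝ := (volume (Metric.ball (0 : E n) 1)).toReal with hv
  have hv0 : 0 < v := ENNReal.toReal_pos hV.ne' hVt
  have hVv : volume (Metric.ball (0 : E n) 1) = ENNReal.ofReal v := (ENNReal.ofReal_toReal hVt).symm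
  set m : ℝ := min ((2:ℝ)⁻¹ ^ α) ((4:ℝ) ^ α) with hm
  have hm0 : 0 < m := lt_min (Real.rpow_pos_of_pos (by norm_num) _)
    (Real.rpow_pos_of_pos (by norm_num) _)
  refine ⟨m * v / 2, by positivity, fun x₀ R hR hx₀ => ?_⟩
  set S := Metric.ball x₀ R \ Metric.ball (0 : E n) (R/2) with hS
  have hsub : S ⊆ Metric.ball x₀ R := diff_subset
  have hRa : (0:ℝ) < R ^ α := Real.rpow_pos_of_pos hR _
  -- pointwise bound on S
  have hpt : ∀ y ∈ S, R ^ α * m ≤ ‖y‖ ^ α := by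
    intro y hy
    have h1 : R / 2 ≤ ‖y‖ := by
      have := hy.2
      simpa [Metric.mem_ball] using this
    have h2 : ‖y‖ ≤ 4 * R := by
      have hy1 : dist y x₀ < R := Metric.mem_ball.mp hy.1
      calc ‖y‖ = ‖y - x₀ + x₀‖ := by rw [sub_add_cancel]
        _ ≤ ‖y - x₀‖ + ‖x₀‖ := norm_add_le _ _
        _ ≤ R + 3 * R := by
            rw [← dist_eq_norm]
            exact add_le_add hy1.le hx₀.le
        _ = 4 * R := by ring
    rcases le_or_gt 0 α with hα | hα
    · calc R ^ α * m ≤ R ^ α * (2:ℝ)⁻¹ ^ α := by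
            exact mul_le_mul_of_nonneg_left (min_le_left _ _) hRa.le
        _ = (R / 2) ^ α := by
            rw [div_eq_mul_inv, Real.mul_rpow hR.le (by norm_num)]
        _ ≤ ‖y‖ ^ α := Real.rpow_le_rpow (by positivity) h1 hα
    · calc R ^ α * m ≤ R ^ α * (4:ℝ) ^ α := by
            exact mul_le_mul_of_nonneg_left (min_le_right _ _) hRa.le
        _ = (4 * R) ^ α := by
            rw [Real.mul_rpow (by norm_num) hR.le]; ring
        _ ≤ ‖y‖ ^ α := Real.rpow_le_rpow_of_nonpos (by linarith) h2 hα.le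
  -- volume bound
  have hvol : ENNReal.ofReal (R ^ n / 2) * volume (Metric.ball (0:E n) 1) ≤ volume S := by
    have h1 : volume (Metric.ball x₀ R)
        = ENNReal.ofReal (R ^ n) * volume (Metric.ball (0:E n) 1) := by
      rw [Measure.addHaar_ball _ _ hR.le, finrank_euclideanSpace_fin]
    have h2 : volume (Metric.ball (0:E n) (R/2))
        = ENNReal.ofReal ((R/2) ^ n) * volume (Metric.ball (0:E n) 1) := by
      rw [Measure.addHaar_ball _ _ (by positivity), finrank_euclideanSpace_fin]
    have h3 : (R/2) ^ n ≤ R ^ n / 2 := by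
      rw [div_pow]
      apply div_le_div_of_nonneg_left (by positivity) (by norm_num)
      calc (2:ℝ) = 2 ^ 1 := by norm_num
        _ ≤ 2 ^ n := by exact pow_le_pow_right₀ (by norm_num) hn
    calc ENNReal.ofReal (R ^ n / 2) * volume (Metric.ball (0:E n) 1)
        ≤ volume (Metric.ball x₀ R) - volume (Metric.ball (0:E n) (R/2)) := by
          refine ENNReal.le_sub_of_add_le_right measure_ball_lt_top.ne ?_
          rw [h1, h2, ← add_mul, ← ENNReal.ofReal_add (by positivity) (by positivity)]
          gcongr
          linarith
      _ ≤ volume S := le_measure_diff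
  calc ENNReal.ofReal (m * v / 2 * R ^ (α + n))
      = ENNReal.ofReal (R ^ α * m) * (ENNReal.ofReal (R ^ n / 2) * ENNReal.ofReal v) := by
        rw [← ENNReal.ofReal_mul (by positivity), ← ENNReal.ofReal_mul (by positivity)]
        congr 1
        rw [Real.rpow_add hR, Real.rpow_natCast]
        ring
    _ = ENNReal.ofReal (R ^ α * m) * (ENNReal.ofReal (R ^ n / 2) * volume (Metric.ball (0:E n) 1)) := by
        rw [hVv]
    _ ≤ ENNReal.ofReal (R ^ α * m) * volume S := by gcongr
    _ = ∫⁻ _ in S, ENNReal.ofReal (R ^ α * m) := (setLIntegral_const _ _).symm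
    _ ≤ ∫⁻ y in S, ENNReal.ofReal (‖y‖ ^ α) := by
        apply setLIntegral_mono (by fun_prop)
        intro y hy
        exact ENNReal.ofReal_le_ofReal (hpt y hy)
    _ ≤ ∫⁻ y in Metric.ball x₀ R, ENNReal.ofReal (‖y‖ ^ α) := lintegral_mono_set hsub

private lemma upperAux (n : ℕ) (hn : 1 ≤ n) (α : ℝ) (hα : -(n:ℝ) < α) :
    ∃ C : ℝ, 0 < C ∧ ∀ (x₀ : E n) (R : ℝ), 0 < R → ‖x₀‖ < 3 * R →
      (∫⁻ y in Metric.ball x₀ R, ENNReal.ofReal (‖y‖ ^ α)) ≤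
        ENNReal.ofReal (C * R ^ (α + n)) := by
  haveI : Nontrivial (E n) := by
    have h : 0 < Module.finrank ℝ (E n) := by
      rw [finrank_euclideanSpace_fin]; omega
    exact Module.nontrivial_of_finrank_pos h
  have hαn : 0 < α + n := by linarith
  have hVt : volume (Metric.ball (0 : E n) 1) ≠ ⊤ := measure_ball_lt_top.ne
  set v : ℝ := (volume (Metric.ball (0 : E n) 1)).toReal with hv
  have hv0 : 0 ≤ v := ENNReal.toReal_nonneg
  have hVv : volume (Metric.ball (0 : E n) 1) = ENNReal.ofReal v := (ENNReal.ofReal_toReal hVt).symm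
  set M : ℝ := max 1 ((2:ℝ)⁻¹ ^ α) with hM
  have hM0 : 0 < M := lt_max_of_lt_left one_pos
  set t : ℝ := (2:ℝ)⁻¹ ^ (α + n) with ht
  have ht0 : 0 < t := Real.rpow_pos_of_pos (by norm_num) _
  have ht1 : t < 1 := Real.rpow_lt_one (by norm_num) (by norm_num) hαn
  refine ⟨4 ^ (α + n) * M * (v + 1) * (1 - t)⁻¹,
    mul_pos (mul_pos (mul_pos (Real.rpow_pos_of_pos (by norm_num) _) hM0) (by linarith))
      (inv_pos.mpr (by linarith)), fun x₀ R hR hx₀ => ?_⟩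
  set A : ℕ → Set (E n) := fun k =>
    Metric.ball (0 : E n) (4 * R * (2:ℝ)⁻¹ ^ k) \ Metric.ball 0 (4 * R * (2:ℝ)⁻¹ ^ (k+1))
    with hA
  -- inclusion of the ball into 0 and the annuli
  have hsub : Metric.ball x₀ R ⊆ {(0 : E n)} ∪ ⋃ k, A k := by
    intro y hy
    have hy4 : ‖y‖ < 4 * R := by
      have hy1 : dist y x₀ < R := Metric.mem_ball.mp hy
      calc ‖y‖ = ‖y - x₀ + x₀‖ := by rw [sub_add_cancel]
        _ ≤ ‖y - x₀‖ + ‖x₀‖ := norm_add_le _ _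
        _ < R + 3 * R := by rw [← dist_eq_norm]; exact add_lt_add_of_le_of_lt hy1.le hx₀
        _ = 4 * R := by ring
    rcases eq_or_ne y 0 with rfl | hy0
    · exact Or.inl rfl
    · have hy0' : 0 < ‖y‖ := norm_pos_iff.mpr hy0
      have hex : ∃ j : ℕ, 4 * R * (2:ℝ)⁻¹ ^ (j+1) ≤ ‖y‖ := by
        obtain ⟨j, hj⟩ := exists_pow_lt_of_lt_one (div_pos hy0' (by linarith : (0:ℝ) < 4 * R))
          (by norm_num : (2:ℝ)⁻¹ < 1)
        refine ⟨j, ?_⟩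
        have h1 : ((2:ℝ)⁻¹) ^ (j+1) ≤ (2:ℝ)⁻¹ ^ j :=
          pow_le_pow_of_le_one (by norm_num) (by norm_num) (Nat.le_succ j)
        have := (lt_div_iff₀ (by linarith : (0:ℝ) < 4 * R)).mp hj
        nlinarith
      refine Or.inr (mem_iUnion.mpr ?_)
      refine ⟨Nat.find hex, ?_, ?_⟩
      · rw [Metric.mem_ball, dist_zero_right]
        rcases Nat.eq_zero_or_pos (Nat.find hex) with h0 | hpos
        · rw [h0]; simpa using hy4
        · obtain ⟨k', hk'⟩ := Nat.exists_eq_succ_of_ne_zero hpos.ne'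
          have := Nat.find_min hex (m := k') (by omega)
          rw [hk']
          push_neg at this
          exact this
      · rw [Metric.mem_ball, dist_zero_right]
        exact not_lt.mpr (Nat.find_spec hex)
  -- per-annulus bound
  have hann : ∀ k : ℕ, (∫⁻ y in A k, ENNReal.ofReal (‖y‖ ^ α)) ≤
      ENNReal.ofReal ((4 * R) ^ (α + n) * M * v) * (ENNReal.ofReal t) ^ k := by
    intro k
    set r : ℝ := 4 * R * (2:ℝ)⁻¹ ^ k with hr
    have hr0 : 0 < r := by positivity
    have hpt : ∀ y ∈ A k, ‖y‖ ^ α ≤ r ^ α * M := by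
      intro y hy
      have h1 : r * 2⁻¹ ≤ ‖y‖ := by
        have := hy.2
        rw [Metric.mem_ball, dist_zero_right, not_lt] at this
        calc r * 2⁻¹ = 4 * R * (2:ℝ)⁻¹ ^ (k+1) := by rw [hr]; ring
          _ ≤ ‖y‖ := this
      have h2 : ‖y‖ ≤ r := by
        have := hy.1
        rw [Metric.mem_ball, dist_zero_right] at this
        exact this.le
      rcases le_or_gt 0 α with hα' | hα'
      · calc ‖y‖ ^ α ≤ r ^ α := Real.rpow_le_rpow (norm_nonneg _) h2 hα'
          _ ≤ r ^ α * M := le_mul_of_one_le_right (by positivity) (le_max_left _ _)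
      · calc ‖y‖ ^ α ≤ (r * 2⁻¹) ^ α :=
              Real.rpow_le_rpow_of_nonpos (by positivity) h1 hα'.le
          _ = r ^ α * (2:ℝ)⁻¹ ^ α := Real.mul_rpow hr0.le (by norm_num)
          _ ≤ r ^ α * M := by
              exact mul_le_mul_of_nonneg_left (le_max_right _ _) (by positivity)
    have hAk : A k ⊆ Metric.ball (0 : E n) r := diff_subset
    calc (∫⁻ y in A k, ENNReal.ofReal (‖y‖ ^ α))
        ≤ ∫⁻ _ in A k, ENNReal.ofReal (r ^ α * M) := by
          apply setLIntegral_mono (by fun_prop)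
          intro y hy
          exact ENNReal.ofReal_le_ofReal (hpt y hy)
      _ = ENNReal.ofReal (r ^ α * M) * volume (A k) := setLIntegral_const _ _
      _ ≤ ENNReal.ofReal (r ^ α * M) * volume (Metric.ball (0 : E n) r) := by
          gcongr
          all_goals exact hAk
      _ = ENNReal.ofReal (r ^ α * M) * (ENNReal.ofReal (r ^ n) * ENNReal.ofReal v) := by
          rw [Measure.addHaar_ball _ _ hr0.le, finrank_euclideanSpace_fin, hVv]
      _ = ENNReal.ofReal (r ^ (α + n) * M * v) := by
          rw [← ENNReal.ofReal_mul (by positivity), ← ENNReal.ofReal_mul (by positivity)]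
          congr 1
          rw [Real.rpow_add hr0, Real.rpow_natCast]
          ring
      _ = ENNReal.ofReal ((4 * R) ^ (α + n) * t ^ k * M * v) := by
          congr 1
          have : r ^ (α + n) = (4 * R) ^ (α + n) * t ^ k := by
            rw [hr, Real.mul_rpow (by linarith) (by positivity), ht,
              ← Real.rpow_natCast ((2:ℝ)⁻¹) k, ← Real.rpow_natCast ((2:ℝ)⁻¹ ^ (α + n)) k,
              ← Real.rpow_mul (by norm_num), ← Real.rpow_mul (by norm_num)]
            ring_nf
          rw [this]
      _ = ENNReal.ofReal ((4 * R) ^ (α + n) * M * v) * (ENNReal.ofReal t) ^ k := by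
          rw [← ENNReal.ofReal_pow ht0.le, ← ENNReal.ofReal_mul (by positivity)]
          congr 1
          ring
  have hgeom : (1 : ℝ≥0∞) - ENNReal.ofReal t = ENNReal.ofReal (1 - t) := by
    rw [← ENNReal.ofReal_one, ← ENNReal.ofReal_sub _ ht0.le]
  calc (∫⁻ y in Metric.ball x₀ R, ENNReal.ofReal (‖y‖ ^ α))
      ≤ ∫⁻ y in {(0 : E n)} ∪ ⋃ k, A k, ENNReal.ofReal (‖y‖ ^ α) := lintegral_mono_set hsub
    _ ≤ (∫⁻ y in {(0 : E n)}, ENNReal.ofReal (‖y‖ ^ α)) +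
        ∫⁻ y in ⋃ k, A k, ENNReal.ofReal (‖y‖ ^ α) := lintegral_union_le _ _ _
    _ ≤ 0 + ∑' k, ∫⁻ y in A k, ENNReal.ofReal (‖y‖ ^ α) := by
        gcongr
        · rw [setLIntegral_measure_zero _ _ (measure_singleton _)]
        · exact lintegral_iUnion_le _ _
    _ ≤ ∑' k, ENNReal.ofReal ((4 * R) ^ (α + n) * M * v) * (ENNReal.ofReal t) ^ k := by
        rw [zero_add]
        exact ENNReal.tsum_le_tsum hann
    _ = ENNReal.ofReal ((4 * R) ^ (α + n) * M * v) * (1 - ENNReal.ofReal t)⁻¹ := by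
        rw [ENNReal.tsum_mul_left, ENNReal.tsum_geometric]
    _ ≤ ENNReal.ofReal (4 ^ (α + n) * M * (v + 1) * (1 - t)⁻¹ * R ^ (α + n)) := by
        rw [hgeom, ← ENNReal.ofReal_inv_of_pos (by linarith),
          ← ENNReal.ofReal_mul (by positivity)]
        apply ENNReal.ofReal_le_ofReal
        rw [Real.mul_rpow (by norm_num) hR.le]
        have h1 : (0:ℝ) < (1 - t)⁻¹ := by
          rw [inv_pos]; linarith
        have h2 : (0:ℝ) < (4:ℝ) ^ (α + n) := Real.rpow_pos_of_pos (by norm_num) _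
        have h3 : (0:ℝ) < R ^ (α + n) := Real.rpow_pos_of_pos hR _
        nlinarith [mul_pos (mul_pos h2 h3) (mul_pos hM0 h1)]

end Aux

theorem stmt18 (n : ℕ) (hn : 1 ≤ n) (α : ℝ) :
    (∃ c : ℝ, 0 < c ∧ ∀ (x₀ : E n) (R : ℝ), 0 < R → ‖x₀‖ < 3 * R →
      ENNReal.ofReal (c * R ^ (α + n)) ≤
        ∫⁻ y in Metric.ball x₀ R, ENNReal.ofReal (‖y‖ ^ α)) ∧
    (-(n : ℝ) < α → ∃ C : ℝ, 0 < C ∧ ∀ (x₀ : E n) (R : ℝ), 0 < R → ‖x₀‖ < 3 * R →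
      (∫⁻ y in Metric.ball x₀ R, ENNReal.ofReal (‖y‖ ^ α)) ≤
        ENNReal.ofReal (C * R ^ (α + n))) :=
  ⟨(lowerAux n hn α).imp fun c hc => hc, fun hα => (upperAux n hn α hα).imp fun C hC => hC⟩
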